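/- arXiv:2211.06272 — 2 statements merged into one kernel-verified Lean document; each statement's English description precedes it below -/
import Mathlib

section
/- Let 0 < α < 1 and λ > 0. Suppose E : [0,T] → ℝ is continuous on (0,T], piecewise C¹ on (0,T], with E(0) = 0 and lim_{t→0^+} E(t) ≥ 0, and suppose (D_t^α + λ)E(t) ≥ 0 for all t ∈ (0,T] (where D_t^α is the Caputo derivative computed from the limit value E(0^+)). Then E(t) ≥ 0 for all t ∈ (0,T]. -/
open Set Filter MeasureTheory intervalIntegral
open scoped Topology

/-- Core estimate: at a point `u` which minimizes `E` over `(0,u]`, with `E u ≤ E₀`,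
the Riemann–Liouville integral of the derivative is nonpositive. -/
lemma caputo_nonpos_at_min (α u : ℝ) (hα0 : 0 < α) (hα1 : α < 1) (hu : 0 < u)
    (E : ℝ → ℝ) (E₀ : ℝ)
    (hdiff : ∀ t ∈ Set.Ioc (0:ℝ) u, DifferentiableAt ℝ E t)
    (hlim : Filter.Tendsto E (nhdsWithin 0 (Set.Ioi 0)) (nhds E₀))
    (hmin : ∀ s ∈ Set.Ioc (0:ℝ) u, E u ≤ E s)
    (hE₀ : E u ≤ E₀) :
    (∫ s in (0:ℝ)..u, (u - s) ^ (-α) * deriv E s) ≤ 0 := by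
  set f : ℝ → ℝ := fun s => (u - s) ^ (-α) * deriv E s with hf
  by_cases hInt : IntervalIntegrable f MeasureTheory.volume 0 u
  swap
  · rw [intervalIntegral.integral_undef hInt]
  set H : ℝ → ℝ := fun s => (u - s) ^ (-α) * (E s - E u) with hH
  -- the cut-off integration-by-parts inequality
  have key : ∀ x ∈ Set.Ioo (0:ℝ) (u/2),
      (∫ s in x..(u-x), f s) ≤ H (u-x) - H x := by
    intro x hx
    have hxu : x ≤ u - x := by nlinarith [hx.2]
    have hsub : Set.uIcc x (u-x) ⊆ Set.uIcc 0 u := by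
      rw [Set.uIcc_of_le hxu, Set.uIcc_of_le hu.le]
      exact Set.Icc_subset_Icc hx.1.le (by linarith [hx.1])
    have hH' : ∀ s ∈ Set.uIcc x (u-x), HasDerivAt H
        (α * (u-s) ^ (-α-1) * (E s - E u) + f s) s := by
      intro s hs
      rw [Set.uIcc_of_le hxu] at hs
      have hs0 : 0 < s := lt_of_lt_of_le hx.1 hs.1
      have hsu : s < u := lt_of_le_of_lt hs.2 (by linarith [hx.1])
      have hne : u - s ≠ 0 := ne_of_gt (by linarith)
      have h1 : HasDerivAt (fun s => (u - s) ^ (-α)) (α * (u-s) ^ (-α-1)) s := by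
        have h0 : HasDerivAt (fun s : ℝ => u - s) (-1) s := by
          simpa using (hasDerivAt_id s).const_sub u
        have := (Real.hasDerivAt_rpow_const (x := u - s) (p := -α) (Or.inl hne)).comp s h0
        exact this.congr_deriv (by ring)
      have h2 : HasDerivAt E (deriv E s) s := (hdiff s ⟨hs0, hsu.le⟩).hasDerivAt
      have := h1.mul (h2.sub_const (E u))
      exact this
    have hfint : IntervalIntegrable f MeasureTheory.volume x (u-x) := hInt.mono_set hsub
    have hgcont : ContinuousOn (fun s => α * (u-s) ^ (-α-1) * (E s - E u))
        (Set.uIcc x (u-x)) := by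
      rw [Set.uIcc_of_le hxu]
      apply ContinuousOn.mul
      · apply continuousOn_const.mul
        apply ContinuousOn.rpow_const
        · exact (continuousOn_const.sub continuousOn_id)
        · intro s hs
          left
          have : s < u := lt_of_le_of_lt hs.2 (by linarith [hx.1])
          exact ne_of_gt (by linarith)
      · apply ContinuousOn.sub _ continuousOn_const
        intro s hs
        have hs0 : 0 < s := lt_of_lt_of_le hx.1 hs.1
        have hsu : s < u := lt_of_le_of_lt hs.2 (by linarith [hx.1])
        exact ((hdiff s ⟨hs0, hsu.le⟩).continuousAt).continuousWithinAt
    have hgint : IntervalIntegrable (fun s => α * (u-s) ^ (-α-1) * (E s - E u))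
        MeasureTheory.volume x (u-x) := hgcont.intervalIntegrable
    have hH'int : IntervalIntegrable (fun s => α * (u-s) ^ (-α-1) * (E s - E u) + f s)
        MeasureTheory.volume x (u-x) := hgint.add hfint
    have h1 : (∫ s in x..(u-x), f s)
        ≤ ∫ s in x..(u-x), (α * (u-s) ^ (-α-1) * (E s - E u) + f s) := by
      apply intervalIntegral.integral_mono_on hxu hfint hH'int
      intro s hs
      have hs0 : 0 < s := lt_of_lt_of_le hx.1 hs.1
      have hsu : s < u := lt_of_le_of_lt hs.2 (by linarith [hx.1])
      have h0 : 0 ≤ α * (u-s) ^ (-α-1) * (E s - E u) := by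
        have hm := hmin s ⟨hs0, hsu.le⟩
        have h : (0:ℝ) ≤ (u-s) ^ (-α-1) := Real.rpow_nonneg (by linarith) _
        exact mul_nonneg (mul_nonneg hα0.le h) (by linarith)
      linarith
    have h2 : (∫ s in x..(u-x), (α * (u-s) ^ (-α-1) * (E s - E u) + f s))
        = H (u-x) - H x :=
      intervalIntegral.integral_eq_sub_of_hasDerivAt hH' hH'int
    linarith
  -- limits along x → 0⁺
  set l : Filter ℝ := nhdsWithin 0 (Set.Ioo (0:ℝ) (u/2)) with hl
  haveI : l.NeBot := left_nhdsWithin_Ioo_neBot (by positivity)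
  have hmem : ∀ᶠ x in l, x ∈ Set.Ioo (0:ℝ) (u/2) := eventually_mem_nhdsWithin
  have hid : Tendsto (fun x : ℝ => x) l (nhds 0) :=
    tendsto_id.mono_left nhdsWithin_le_nhds
  have husub : Tendsto (fun x : ℝ => u - x) l (nhds u) := by
    simpa using (tendsto_const_nhds.sub hid)
  -- Limit A : the truncated integrals converge to the full integral
  set G : ℝ → ℝ := fun y => ∫ s in (0:ℝ)..y, f s with hG
  have hGcont : ContinuousOn G (Set.uIcc 0 u) :=
    intervalIntegral.continuousOn_primitive_interval' hInt Set.left_mem_uIcc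
  have huIcc : Set.uIcc (0:ℝ) u = Set.Icc 0 u := Set.uIcc_of_le hu.le
  rw [huIcc] at hGcont
  have hmemIcc : ∀ᶠ x in l, x ∈ Set.Icc (0:ℝ) u := by
    filter_upwards [hmem] with x hx
    exact ⟨hx.1.le, by linarith [hx.2, hx.1]⟩
  have hmemIcc' : ∀ᶠ x in l, u - x ∈ Set.Icc (0:ℝ) u := by
    filter_upwards [hmem] with x hx
    constructor
    · linarith [hx.2]
    · linarith [hx.1]
  have hG0 : Tendsto G l (nhds 0) := by
    have h0 : G 0 = 0 := intervalIntegral.integral_same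
    have hc : Tendsto G (nhdsWithin 0 (Set.Icc 0 u)) (nhds (G 0)) :=
      hGcont 0 ⟨le_rfl, hu.le⟩
    rw [h0] at hc
    exact hc.mono_left (nhdsWithin_mono _ (fun y hy => ⟨hy.1.le, by linarith [hy.2]⟩))
  have hGu : Tendsto (fun x => G (u - x)) l (nhds (G u)) := by
    have hc : Tendsto G (nhdsWithin u (Set.Icc 0 u)) (nhds (G u)) :=
      hGcont u ⟨hu.le, le_rfl⟩
    exact hc.comp (tendsto_nhdsWithin_of_tendsto_nhds_of_eventually_within _ husub hmemIcc')
  have hA : Tendsto (fun x => ∫ s in x..(u-x), f s) l (nhds (G u)) := by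
    have heq : ∀ᶠ x in l, G (u - x) - G x = ∫ s in x..(u-x), f s := by
      filter_upwards [hmem] with x hx
      have hxu : x ≤ u - x := by nlinarith [hx.2]
      have h1 : IntervalIntegrable f MeasureTheory.volume 0 (u - x) := by
        apply hInt.mono_set
        rw [Set.uIcc_of_le (by linarith [hx.1, hx.2] : (0:ℝ) ≤ u - x), Set.uIcc_of_le hu.le]
        exact Set.Icc_subset_Icc le_rfl (by linarith [hx.1])
      have h2 : IntervalIntegrable f MeasureTheory.volume 0 x := by
        apply hInt.mono_set
        rw [Set.uIcc_of_le hx.1.le, Set.uIcc_of_le hu.le]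
        exact Set.Icc_subset_Icc le_rfl (by linarith [hx.2])
      exact intervalIntegral.integral_interval_sub_left h1 h2
    have : Tendsto (fun x => G (u - x) - G x) l (nhds (G u - 0)) := hGu.sub hG0
    rw [sub_zero] at this
    exact this.congr' heq
  -- Limit B : boundary term at the left endpoint
  have hB : Tendsto H l (nhds (u ^ (-α) * (E₀ - E u))) := by
    have h1 : Tendsto (fun x : ℝ => (u - x) ^ (-α)) l (nhds (u ^ (-α))) := by
      have hc : ContinuousAt (fun x : ℝ => (u - x) ^ (-α)) 0 := by
        apply ContinuousAt.rpow_const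
        · exact (continuous_const.sub continuous_id).continuousAt
        · left; simpa using hu.ne'
      have := hc.tendsto
      simp only [sub_zero] at this
      exact this.mono_left nhdsWithin_le_nhds
    have h2 : Tendsto (fun x => E x - E u) l (nhds (E₀ - E u)) :=
      (hlim.mono_left (nhdsWithin_mono _ Set.Ioo_subset_Ioi_self)).sub tendsto_const_nhds
    exact h1.mul h2
  -- Limit C : boundary term at the right endpoint tends to 0
  have hC : Tendsto (fun x => H (u - x)) l (nhds 0) := by
    have hder : HasDerivAt E (deriv E u) u := (hdiff u ⟨hu, le_rfl⟩).hasDerivAt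
    have hslope : Tendsto (slope E u) (nhdsWithin u {u}ᶜ) (nhds (deriv E u)) :=
      hasDerivAt_iff_tendsto_slope.mp hder
    have hmap : Tendsto (fun x : ℝ => u - x) l (nhdsWithin u {u}ᶜ) := by
      apply tendsto_nhdsWithin_of_tendsto_nhds_of_eventually_within _ husub
      filter_upwards [hmem] with x hx
      simp only [Set.mem_compl_iff, Set.mem_singleton_iff]
      intro h
      have : x = 0 := by linarith [sub_eq_self.mp h]
      linarith [hx.1]
    have hS : Tendsto (fun x => slope E u (u - x)) l (nhds (deriv E u)) := hslope.comp hmap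
    have hpow : Tendsto (fun x : ℝ => x ^ (1 - α)) l (nhds 0) := by
      have hc : ContinuousAt (fun x : ℝ => x ^ (1 - α)) 0 :=
        Real.continuousAt_rpow_const 0 (1 - α) (Or.inr (by linarith))
      have := hc.tendsto
      rw [Real.zero_rpow (by linarith : (1:ℝ) - α ≠ 0)] at this
      exact this.mono_left nhdsWithin_le_nhds
    have hcomb : Tendsto (fun x : ℝ => -(x ^ (1 - α)) * slope E u (u - x)) l
        (nhds (-(0:ℝ) * deriv E u)) := (hpow.neg).mul hS
    rw [neg_zero, zero_mul] at hcomb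
    apply hcomb.congr'
    filter_upwards [hmem] with x hx
    have hx0 : (0:ℝ) < x := hx.1
    have hxx : x ^ (1 - α) = x ^ (-α) * x := by
      rw [show (1:ℝ) - α = -α + 1 by ring, Real.rpow_add hx0, Real.rpow_one]
    rw [slope_def_field]
    simp only [hH, sub_sub_cancel]
    rw [hxx]
    have hxne : x ≠ 0 := hx0.ne'
    have : (u - x) - u = -x := by ring
    rw [this]
    field_simp
  -- Combine
  have hbound : G u ≤ 0 - u ^ (-α) * (E₀ - E u) := by
    apply le_of_tendsto_of_tendsto hA ((hC.sub hB).congr (fun x => rfl))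
    filter_upwards [hmem] with x hx
    exact key x hx
  have hpos : (0:ℝ) ≤ u ^ (-α) := Real.rpow_nonneg hu.le _
  have : G u = ∫ s in (0:ℝ)..u, (u - s) ^ (-α) * deriv E s := rfl
  rw [← this]
  nlinarith [mul_nonneg hpos (by linarith : (0:ℝ) ≤ E₀ - E u)]

/-- Maximum/comparison principle for the scalar fractional operator `D_t^α + λ`:
if `(D_t^α + λ)E ≥ 0` on `(0,T]` and `E(0⁺) ≥ 0`, then `E ≥ 0` on `(0,T]`. -/
theorem fractional_maximum_principle
    (α lam T : ℝ) (hα0 : 0 < α) (hα1 : α < 1) (hlam : 0 < lam) (hT : 0 < T)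
    (E : ℝ → ℝ) (E₀ : ℝ)
    (hE0 : E 0 = 0)
    (hcont : ContinuousOn E (Set.Ioc 0 T))
    (hdiff : ∀ t ∈ Set.Ioo (0:ℝ) T, DifferentiableAt ℝ E t)
    (hlim : Filter.Tendsto E (nhdsWithin 0 (Set.Ioi 0)) (nhds E₀))
    (hE₀ : 0 ≤ E₀)
    (hineq : ∀ t ∈ Set.Ioc (0:ℝ) T,
        0 ≤ (1 / Real.Gamma (1 - α)) * (∫ s in (0:ℝ)..t, (t - s) ^ (-α) * deriv E s)
            + lam * E t) :
    ∀ t ∈ Set.Ioc (0:ℝ) T, 0 ≤ E t := by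
  have key : ∀ t ∈ Set.Ioo (0:ℝ) T, 0 ≤ E t := by
    by_contra hcon
    push_neg at hcon
    obtain ⟨t₀, ht₀, hneg⟩ := hcon
    -- near 0, E is above E t₀ (which is negative)
    have hev : ∀ᶠ s in nhdsWithin 0 (Set.Ioi 0), E t₀ < E s :=
      hlim.eventually (eventually_gt_nhds (by linarith))
    obtain ⟨ε, hε, hevε⟩ :=
      (mem_nhdsGT_iff_exists_Ioo_subset' (by linarith [ht₀.1] : (0:ℝ) < t₀)).mp hev
    set δ : ℝ := min ε (t₀/2) with hδdef
    have hδpos : 0 < δ := lt_min hε (by linarith [ht₀.1])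
    have hδt₀ : δ < t₀ := lt_of_le_of_lt (min_le_right _ _) (by linarith [ht₀.1])
    have hδE : ∀ s ∈ Set.Ioo (0:ℝ) δ, E t₀ < E s := by
      intro s hs
      exact hevε ⟨hs.1, lt_of_lt_of_le hs.2 (min_le_left _ _)⟩
    -- minimum point over [δ, t₀]
    obtain ⟨u, huI, humin⟩ := isCompact_Icc.exists_isMinOn ⟨t₀, hδt₀.le, le_rfl⟩
      (hcont.mono (fun s hs => ⟨lt_of_lt_of_le hδpos hs.1, le_trans hs.2 ht₀.2.le⟩))
    have hu0 : 0 < u := lt_of_lt_of_le hδpos huI.1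
    have huT : u < T := lt_of_le_of_lt huI.2 ht₀.2
    have huneg : E u ≤ E t₀ := humin ⟨hδt₀.le, le_rfl⟩
    have hmin' : ∀ s ∈ Set.Ioc (0:ℝ) u, E u ≤ E s := by
      intro s hs
      by_cases hsδ : δ ≤ s
      · exact humin ⟨hsδ, le_trans hs.2 huI.2⟩
      · push_neg at hsδ
        have := hδE s ⟨hs.1, hsδ⟩
        linarith
    have hcore := caputo_nonpos_at_min α u hα0 hα1 hu0 E E₀
      (fun t ht => hdiff t ⟨ht.1, lt_of_le_of_lt ht.2 huT⟩) hlim hmin' (by linarith)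
    have hΓ : 0 < Real.Gamma (1 - α) := Real.Gamma_pos_of_pos (by linarith)
    have hq := hineq u ⟨hu0, huT.le⟩
    have hc : (0:ℝ) < 1 / Real.Gamma (1 - α) := by positivity
    nlinarith [mul_nonneg hc.le (neg_nonneg.mpr hcore), mul_pos hlam (by linarith : (0:ℝ) < -E u)]
  intro t ht
  rcases eq_or_lt_of_le ht.2 with rfl | hlt
  · haveI : (nhdsWithin t (Set.Ioo 0 t)).NeBot := right_nhdsWithin_Ioo_neBot ht.1
    have hc : Filter.Tendsto E (nhdsWithin t (Set.Ioo 0 t)) (nhds (E t)) :=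
      (hcont t ⟨ht.1, le_rfl⟩).mono (fun s hs => ⟨hs.1, hs.2.le⟩)
    apply ge_of_tendsto hc
    filter_upwards [eventually_mem_nhdsWithin] with s hs
    exact key s ⟨hs.1, hs.2⟩
  · exact key t ⟨ht.1, hlt⟩
end

section
/- Let 0 < α < 1 and suppose v : [0,T] → ℝ is continuous with v(0) = 0, piecewise C¹ on (0,T], and attains a maximum of |v| at some point t* ∈ (0,T] with v(t*) ≥ 0. Then D_t^α v(t*) ≥ 0, where D_t^α is the Caputo derivative. -/
open MeasureTheory Set Filter intervalIntegral

/-- If `v(0) = 0` and `|v|` attains its maximum over `[0,T]` at `t* ∈ (0,T]` with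
`v(t*) ≥ 0`, then the Caputo derivative of `v` at `t*` is nonnegative. -/
theorem caputo_nonneg_at_max
    (α T : ℝ) (hα0 : 0 < α) (hα1 : α < 1) (hT : 0 < T)
    (v : ℝ → ℝ)
    (hcont : ContinuousOn v (Set.Icc 0 T))
    (hv0 : v 0 = 0)
    (hdiff : ∀ t ∈ Set.Ioo (0:ℝ) T, DifferentiableAt ℝ v t)
    (tstar : ℝ) (htstar : tstar ∈ Set.Ioc (0:ℝ) T)
    (hmax : ∀ s ∈ Set.Icc (0:ℝ) T, |v s| ≤ |v tstar|)
    (hpos : 0 ≤ v tstar) :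
    0 ≤ (1 / Real.Gamma (1 - α)) *
        ∫ s in (0:ℝ)..tstar, (tstar - s) ^ (-α) * deriv v s := by
  obtain ⟨ht0, htT⟩ := htstar
  have hΓ : 0 < Real.Gamma (1 - α) := Real.Gamma_pos_of_pos (by linarith)
  have hfac : (0:ℝ) ≤ 1 / Real.Gamma (1 - α) := by positivity
  set g : ℝ → ℝ := fun s => (tstar - s) ^ (-α) * deriv v s with hgdef
  refine mul_nonneg hfac ?_
  by_cases hint : IntervalIntegrable g volume 0 tstar
  swap
  · rw [intervalIntegral.integral_undef hint]
  set I := ∫ s in (0:ℝ)..tstar, g s with hIdef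
  set τ : ℝ → ℝ := fun ε => ∫ s in (tstar - ε)..tstar, |g s| with hτdef
  have hub : ∀ s ∈ Icc (0:ℝ) T, v s ≤ v tstar := fun s hs =>
    le_trans (le_abs_self _) (le_trans (hmax s hs) (le_of_eq (abs_of_nonneg hpos)))
  have habs : IntervalIntegrable (fun s => |g s|) volume 0 tstar := hint.abs
  -- the weight and its derivative
  set F : ℝ → ℝ := fun s => (tstar - s) ^ (-α) with hFdef
  set F1 : ℝ → ℝ := fun s => α * (tstar - s) ^ (-α - 1) with hF1def
  have hFderiv : ∀ x : ℝ, x < tstar → HasDerivAt F (F1 x) x := by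
    intro x hx
    have hx' : (0:ℝ) < tstar - x := by linarith
    have h1 : HasDerivAt (fun y : ℝ => tstar - y) (-1) x := by
      simpa using (hasDerivAt_id x).const_sub tstar
    have h2 : HasDerivAt (fun z : ℝ => z ^ (-α)) (-α * (tstar - x) ^ (-α - 1)) (tstar - x) :=
      Real.hasDerivAt_rpow_const (Or.inl (ne_of_gt hx'))
    have := h2.comp x h1
    refine this.congr_deriv ?_
    simp only [hF1def]; ring
  -- the key estimate for each ε
  have key : ∀ ε ∈ Ioo (0:ℝ) tstar, -(2 * τ ε) ≤ I := by
    rintro ε ⟨hε0, hεt⟩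
    set b := tstar - ε with hbdef
    have hb0 : 0 < b := by simp only [hbdef]; linarith
    have hbt : b < tstar := by simp only [hbdef]; linarith
    have hbT : b < T := lt_of_lt_of_le hbt htT
    have huicc1 : uIcc (0:ℝ) b = Icc 0 b := uIcc_of_le hb0.le
    have huicc2 : uIcc b tstar = Icc b tstar := uIcc_of_le hbt.le
    have hg1 : IntervalIntegrable g volume 0 b :=
      hint.mono_set (by
        rw [huicc1, uIcc_of_le ht0.le]
        exact Icc_subset_Icc le_rfl hbt.le)
    have hg2 : IntervalIntegrable g volume b tstar :=
      hint.mono_set (by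
        rw [huicc2, uIcc_of_le ht0.le]
        exact Icc_subset_Icc hb0.le le_rfl)
    -- continuity facts on [0, b]
    have hne : ∀ x ∈ Icc (0:ℝ) b, tstar - id x ≠ 0 := by
      intro x hx
      have hxb : x ≤ tstar - ε := hx.2
      have : 0 < tstar - x := by linarith
      simpa using ne_of_gt this
    have hFcont : ContinuousOn F (Icc 0 b) :=
      ((continuous_const.sub continuous_id).continuousOn).rpow_const
        fun x hx => Or.inl (hne x hx)
    have hF1cont : ContinuousOn F1 (Icc 0 b) :=
      continuousOn_const.mul (((continuous_const.sub continuous_id).continuousOn).rpow_const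
        fun x hx => Or.inl (hne x hx))
    have hvcont : ContinuousOn v (Icc 0 b) := hcont.mono (Icc_subset_Icc le_rfl hbT.le)
    have hF1v_cont : ContinuousOn (fun s => F1 s * v s) (Icc 0 b) := hF1cont.mul hvcont
    have hF1v_int : IntervalIntegrable (fun s => F1 s * v s) volume 0 b :=
      (huicc1 ▸ hF1v_cont).intervalIntegrable
    -- integration by parts via FTC on [0, b]
    have hFTC : ∫ s in (0:ℝ)..b, (F1 s * v s + g s) = F b * v b - F 0 * v 0 := by
      refine intervalIntegral.integral_eq_sub_of_hasDeriv_right_of_le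
        (f := fun s => F s * v s) (f' := fun s => F1 s * v s + g s)
        hb0.le (hFcont.mul hvcont) ?_ (hF1v_int.add hg1)
      intro x hx
      have hx1 : x ∈ Ioo (0:ℝ) T := ⟨hx.1, lt_of_lt_of_le (lt_trans hx.2 hbt) htT⟩
      have hdv : HasDerivAt v (deriv v x) x := (hdiff x hx1).hasDerivAt
      have h5 := (hFderiv x (lt_trans hx.2 hbt)).mul hdv
      exact h5.hasDerivWithinAt
    have hu0 : F 0 * v 0 = 0 := by simp [hv0]
    have hub' : F b * v b = ε ^ (-α) * v b := by
      simp only [hFdef, hbdef]; norm_num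
    have hsplit : ∫ s in (0:ℝ)..b, g s
        = ε ^ (-α) * v b - ∫ s in (0:ℝ)..b, F1 s * v s := by
      have := intervalIntegral.integral_add hF1v_int hg1
      rw [hFTC, hu0, hub'] at this
      linarith [this]
    -- bound the F1 * v integral
    have hF1nonneg : ∀ x ∈ Icc (0:ℝ) b, 0 ≤ F1 x := by
      intro x hx
      have : (0:ℝ) < tstar - x := by linarith [hx.2]
      positivity
    have hF1c_int : IntervalIntegrable (fun s => F1 s * v tstar) volume 0 b :=
      (huicc1 ▸ hF1cont.mul continuousOn_const).intervalIntegrable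
    have hmono : ∫ s in (0:ℝ)..b, F1 s * v s ≤ ∫ s in (0:ℝ)..b, F1 s * v tstar := by
      apply intervalIntegral.integral_mono_on hb0.le hF1v_int hF1c_int
      intro x hx
      have hxT : x ∈ Icc (0:ℝ) T := ⟨hx.1, le_trans hx.2 hbT.le⟩
      exact mul_le_mul_of_nonneg_left (hub x hxT) (hF1nonneg x hx)
    have hF1int_val : ∫ s in (0:ℝ)..b, F1 s = ε ^ (-α) - tstar ^ (-α) := by
      have : ∫ s in (0:ℝ)..b, F1 s = F b - F 0 := by
        apply intervalIntegral.integral_eq_sub_of_hasDerivAt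
        · intro x hx
          rw [huicc1] at hx
          exact hFderiv x (lt_of_le_of_lt hx.2 hbt)
        · exact (huicc1 ▸ hF1cont).intervalIntegrable
      rw [this]
      simp only [hFdef, hbdef]
      norm_num
    have hbound : ∫ s in (0:ℝ)..b, F1 s * v tstar ≤ ε ^ (-α) * v tstar := by
      rw [intervalIntegral.integral_mul_const, hF1int_val]
      have h1 : (0:ℝ) ≤ tstar ^ (-α) := Real.rpow_nonneg ht0.le _
      nlinarith
    have hlow : ε ^ (-α) * (v b - v tstar) ≤ ∫ s in (0:ℝ)..b, g s := by
      rw [hsplit]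
      have := le_trans hmono hbound
      nlinarith [this]
    -- the tail estimate : ε^(-α) (v tstar - v b) ≤ τ ε
    have hεα : (0:ℝ) < ε ^ (-α) := Real.rpow_pos_of_pos hε0 _
    have hεα' : (0:ℝ) < ε ^ α := Real.rpow_pos_of_pos hε0 _
    have hεmul : ε ^ (-α) * ε ^ α = 1 := by
      rw [← Real.rpow_add hε0]; norm_num
    have hptbound : ∀ s ∈ Ioo b tstar, |deriv v s| ≤ ε ^ α * |g s| := by
      intro s hs
      have hs1 : (0:ℝ) < tstar - s := by linarith [hs.2]
      have hs2 : tstar - s ≤ ε := by simp only [hbdef] at hs; linarith [hs.1]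
      have h3 : ε ^ (-α) ≤ (tstar - s) ^ (-α) :=
        Real.rpow_le_rpow_of_nonpos hs1 hs2 (by linarith)
      have h4 : |g s| = (tstar - s) ^ (-α) * |deriv v s| := by
        simp only [hgdef, abs_mul, abs_of_nonneg (Real.rpow_nonneg hs1.le _)]
      rw [h4]
      calc |deriv v s| = ε ^ α * (ε ^ (-α) * |deriv v s|) := by
            rw [← mul_assoc, mul_comm (ε ^ α), hεmul, one_mul]
        _ ≤ ε ^ α * ((tstar - s) ^ (-α) * |deriv v s|) := by
            apply mul_le_mul_of_nonneg_left _ hεα'.le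
            exact mul_le_mul_of_nonneg_right h3 (abs_nonneg _)
    have hgIoo : IntegrableOn (fun s => |g s|) (Ioo b tstar) volume :=
      (((intervalIntegrable_iff_integrableOn_Ioc_of_le hbt.le).mp hg2.abs).mono_set
        Ioo_subset_Ioc_self)
    have hboundIoo : IntegrableOn (fun s => ε ^ α * |g s|) (Ioo b tstar) volume :=
      hgIoo.const_mul _
    have hvint : IntervalIntegrable (deriv v) volume b tstar := by
      rw [intervalIntegrable_iff_integrableOn_Ioc_of_le hbt.le,
        integrableOn_Ioc_iff_integrableOn_Ioo]
      apply Integrable.mono' hboundIoo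
      · exact (measurable_deriv v).aestronglyMeasurable.restrict
      · filter_upwards [self_mem_ae_restrict measurableSet_Ioo] with s hs
        simpa using hptbound s hs
    have hFTCv : ∫ s in b..tstar, deriv v s = v tstar - v b := by
      apply intervalIntegral.integral_eq_sub_of_hasDeriv_right_of_le hbt.le
      · exact hcont.mono (Icc_subset_Icc hb0.le htT)
      · intro x hx
        have hx1 : x ∈ Ioo (0:ℝ) T := ⟨lt_trans hb0 hx.1, lt_of_lt_of_le hx.2 htT⟩
        exact ((hdiff x hx1).hasDerivAt).hasDerivWithinAt
      · exact hvint
    have hdvIoo : IntegrableOn (deriv v) (Ioo b tstar) volume :=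
      (((intervalIntegrable_iff_integrableOn_Ioc_of_le hbt.le).mp hvint).mono_set
        Ioo_subset_Ioc_self)
    have htail : v tstar - v b ≤ ε ^ α * τ ε := by
      rw [← hFTCv]
      have h1 : ∫ s in b..tstar, deriv v s = ∫ s in Ioo b tstar, deriv v s := by
        rw [intervalIntegral.integral_of_le hbt.le, MeasureTheory.integral_Ioc_eq_integral_Ioo]
      have h2 : ε ^ α * τ ε = ∫ s in Ioo b tstar, ε ^ α * |g s| := by
        simp only [hτdef]
        rw [intervalIntegral.integral_of_le hbt.le, MeasureTheory.integral_Ioc_eq_integral_Ioo,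
          ← MeasureTheory.integral_const_mul]
      rw [h1, h2]
      apply setIntegral_mono_on hdvIoo hboundIoo measurableSet_Ioo
      intro x hx
      exact le_trans (le_abs_self _) (hptbound x hx)
    have hτnn : 0 ≤ τ ε := by
      simp only [hτdef]
      apply intervalIntegral.integral_nonneg hbt.le
      intro x _; exact abs_nonneg _
    have htail' : ε ^ (-α) * (v tstar - v b) ≤ τ ε := by
      calc ε ^ (-α) * (v tstar - v b) ≤ ε ^ (-α) * (ε ^ α * τ ε) :=
            mul_le_mul_of_nonneg_left htail hεα.le
        _ = τ ε := by rw [← mul_assoc, hεmul, one_mul]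
    -- combine
    have hImid : |∫ s in b..tstar, g s| ≤ τ ε := by
      simpa only [hτdef, hbdef] using intervalIntegral.abs_integral_le_integral_abs hbt.le (f := g)
    have hIsplit : I = (∫ s in (0:ℝ)..b, g s) + ∫ s in b..tstar, g s :=
      (intervalIntegral.integral_add_adjacent_intervals hg1 hg2).symm
    have h5 : -(τ ε) ≤ ∫ s in b..tstar, g s := (abs_le.mp hImid).1
    have h6 : ε ^ (-α) * (v b - v tstar) = -(ε ^ (-α) * (v tstar - v b)) := by ring
    rw [hIsplit]
    have h7 : -(τ ε) ≤ ∫ s in (0:ℝ)..b, g s := by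
      refine le_trans ?_ hlow
      rw [h6]
      exact neg_le_neg htail'
    linarith
  -- pass to the limit ε → 0⁺
  have hPint : IntegrableOn (fun s => |g s|) (Icc 0 tstar) volume :=
    (intervalIntegrable_iff_integrableOn_Icc_of_le ht0.le).mp habs
  have hPcont : ContinuousOn (fun x => ∫ s in (0:ℝ)..x, |g s|) (Icc 0 tstar) := by
    have := continuousOn_primitive_interval (f := fun s => |g s|) (a := 0) (b := tstar)
      (μ := volume) (by rwa [uIcc_of_le ht0.le])
    rwa [uIcc_of_le ht0.le] at this
  have htend1 : Tendsto (fun ε => tstar - ε) (nhdsWithin 0 (Ioi (0:ℝ)))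
      (nhdsWithin tstar (Icc 0 tstar)) := by
    apply tendsto_nhdsWithin_of_tendsto_nhds_of_eventually_within
    · have : Tendsto (fun ε : ℝ => tstar - ε) (nhds 0) (nhds (tstar - 0)) :=
        (continuous_const.sub continuous_id).tendsto 0
      simpa using this.mono_left nhdsWithin_le_nhds
    · filter_upwards [Ioo_mem_nhdsGT_of_mem ⟨le_refl 0, ht0⟩] with ε hε
      exact ⟨by linarith [hε.2], by linarith [hε.1]⟩
  have htendτ : Tendsto τ (nhdsWithin 0 (Ioi (0:ℝ))) (nhds 0) := by
    have hc : Tendsto (fun ε => (∫ s in (0:ℝ)..tstar, |g s|)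
        - ∫ s in (0:ℝ)..(tstar - ε), |g s|) (nhdsWithin 0 (Ioi (0:ℝ))) (nhds 0) := by
      have h1 : Tendsto (fun ε => ∫ s in (0:ℝ)..(tstar - ε), |g s|)
          (nhdsWithin 0 (Ioi (0:ℝ))) (nhds (∫ s in (0:ℝ)..tstar, |g s|)) :=
        (hPcont tstar ⟨ht0.le, le_refl _⟩).tendsto.comp htend1
      have h2 := h1.const_sub (∫ s in (0:ℝ)..tstar, |g s|)
      simpa using h2
    apply hc.congr'
    filter_upwards [Ioo_mem_nhdsGT_of_mem ⟨le_refl 0, ht0⟩] with ε hε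
    have hgb : IntervalIntegrable (fun s => |g s|) volume 0 (tstar - ε) :=
      habs.mono_set (by
        rw [uIcc_of_le (by linarith [hε.2] : (0:ℝ) ≤ tstar - ε), uIcc_of_le ht0.le]
        exact Icc_subset_Icc le_rfl (by linarith [hε.1]))
    simpa [hτdef] using intervalIntegral.integral_interval_sub_left habs hgb
  have htendlim : Tendsto (fun ε => -(2 * τ ε)) (nhdsWithin 0 (Ioi (0:ℝ))) (nhds 0) := by
    have := (htendτ.const_mul 2).neg
    simpa using this
  refine le_of_tendsto htendlim ?_
  filter_upwards [Ioo_mem_nhdsGT_of_mem ⟨le_refl 0, ht0⟩] with ε hε using key ε hε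
end
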